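/- Let n = 2 and let ψ = c₀₀|00⟩ + c₀₁|01⟩ + c₁₀|10⟩ + c₁₁|11⟩ be a unit vector in ℂ⁴, and set ρ = |ψ⟩⟨ψ|. Let Φ(ρ) = a₁ρa₁† + a₂ρa₂† and let M be the 2×2 one-particle reduced density matrix with entries M(s,t) = ⟨ψ, aₛ†aₜ ψ⟩. Then charpoly(Φ(ρ))(X) = X² · charpoly(M)(X); in particular the nonzero spectra of Φ(ρ) and M coincide with multiplicities. -/

import Mathlib

open Matrix Polynomial

/-- Binary strings of length `n`, indexing the `2^n`-dimensional Fock space. -/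
abbrev Idx (n : ℕ) := Fin n → Fin 2

/-- Jordan–Wigner creation matrix `aₜ†` for mode `t`:
`aₜ†|j₁…jₙ⟩ = (−1)^{j₁+⋯+j_{t−1}} |j₁…j_{t−1} 1 j_{t+1}…jₙ⟩` if `jₜ = 0`, and `0` if `jₜ = 1`. -/
noncomputable def adag (n : ℕ) (t : Fin n) : Matrix (Idx n) (Idx n) ℂ :=
  Matrix.of fun J K =>
    if K t = 0 ∧ J = Function.update K t 1
    then (-1 : ℂ) ^ (∑ s ∈ Finset.univ.filter (fun s => s < t), (K s : ℕ))
    else 0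

/-- Jordan–Wigner annihilation matrix `aₜ`, the conjugate transpose of `aₜ†`. -/
noncomputable def ann (n : ℕ) (t : Fin n) : Matrix (Idx n) (Idx n) ℂ := (adag n t)ᴴ

/-- Expectation value `⟨ψ, M ψ⟩` (antilinear in the first argument). -/
noncomputable def ev {n : ℕ} (ψ : Idx n → ℂ) (M : Matrix (Idx n) (Idx n) ℂ) : ℂ :=
  star ψ ⬝ᵥ (M *ᵥ ψ)

/-- The one-particle reduced density matrix `M(s,t) = ⟨ψ, aₛ†aₜ ψ⟩`. -/
noncomputable def oneRDM (n : ℕ) (ψ : Idx n → ℂ) : Matrix (Fin n) (Fin n) ℂ :=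
  Matrix.of fun s t => ev ψ (adag n s * ann n t)

/-- General rectangular "charpoly of AB vs BA" identity:
`X^|m| charpoly(AB) = X^|n| charpoly(BA)`. -/
lemma charpoly_mul_comm_gen {n m : Type*} [Fintype n] [Fintype m] [DecidableEq n] [DecidableEq m]
    (A : Matrix n m ℂ) (B : Matrix m n ℂ) :
    X ^ (Fintype.card m) * (A * B).charpoly = X ^ (Fintype.card n) * (B * A).charpoly := by
  set A' := A.map (C : ℂ →+* ℂ[X]) with hA'
  set B' := B.map (C : ℂ →+* ℂ[X]) with hB'
  have hc : (diagonal fun _ : m => (X : ℂ[X])) * B' = B' * diagonal fun _ : n => (X : ℂ[X]) := by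
    ext i j : 2
    simp [Matrix.diagonal_mul, Matrix.mul_diagonal, mul_comm]
  have key : fromBlocks (scalar n X) A' (scalar m X * B') (scalar m X)
      = fromBlocks 1 0 B' 1 * fromBlocks (scalar n X) A' 0 (scalar m X - B' * A') := by
    rw [fromBlocks_multiply]
    simp [hc]
    exact hc
  have key2 : fromBlocks (scalar n X) A' (scalar m X * B') (scalar m X)
      = fromBlocks (scalar n X - A' * B') A' 0 (scalar m X) * fromBlocks 1 0 B' 1 := by
    rw [fromBlocks_multiply]
    simp [sub_mul]
    rfl
  have hBA : scalar m X - B' * A' = charmatrix (B * A) := by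
    rw [charmatrix]; congr 1; simp [hA', hB', Matrix.map_mul]
  have hAB : scalar n X - A' * B' = charmatrix (A * B) := by
    rw [charmatrix]; congr 1; simp [hA', hB', Matrix.map_mul]
  have h1 : (fromBlocks (scalar n X) A' (scalar m X * B') (scalar m X)).det
      = X ^ (Fintype.card n) * (B * A).charpoly := by
    rw [key, det_mul, det_fromBlocks_zero₁₂, det_fromBlocks_zero₂₁, hBA]
    simp [Matrix.scalar, Matrix.det_diagonal, Finset.prod_const, Finset.card_univ,
      Matrix.charpoly]
  have h2 : (fromBlocks (scalar n X) A' (scalar m X * B') (scalar m X)).det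
      = X ^ (Fintype.card m) * (A * B).charpoly := by
    rw [key2, det_mul, det_fromBlocks_zero₁₂, det_fromBlocks_zero₂₁, hAB]
    simp [Matrix.scalar, Matrix.det_diagonal, Finset.prod_const, Finset.card_univ,
      Matrix.charpoly]
    ring
  rw [← h1, h2]

/-- The `4 × 2` matrix whose columns are `a₁ψ` and `a₂ψ`. -/
noncomputable def Vmat (ψ : Idx 2 → ℂ) : Matrix (Idx 2) (Fin 2) ℂ :=
  Matrix.of fun J s => (ann 2 s *ᵥ ψ) J

lemma mul_vecMulVec_mul (M : Matrix (Idx 2) (Idx 2) ℂ) (u : Idx 2 → ℂ) :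
    M * Matrix.vecMulVec u (star u) * Mᴴ
      = Matrix.vecMulVec (M *ᵥ u) (star (M *ᵥ u)) := by
  ext J K
  simp only [Matrix.mul_apply, Matrix.vecMulVec_apply, Matrix.conjTranspose_apply,
    Matrix.mulVec, dotProduct, Pi.star_apply, Finset.sum_mul, Finset.mul_sum,
    star_sum, star_mul']
  refine Finset.sum_congr rfl fun a _ => Finset.sum_congr rfl fun b _ => ?_
  ring

lemma lhs_eq (ψ : Idx 2 → ℂ) :
    ann 2 0 * Matrix.vecMulVec ψ (star ψ) * adag 2 0 +
        ann 2 1 * Matrix.vecMulVec ψ (star ψ) * adag 2 1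
      = Vmat ψ * (Vmat ψ)ᴴ := by
  have h : ∀ t : Fin 2, adag 2 t = (ann 2 t)ᴴ := by
    intro t; rw [ann, conjTranspose_conjTranspose]
  ext J K
  rw [h 0, h 1]
  rw [Matrix.add_apply, (mul_vecMulVec_mul (ann 2 0) ψ), (mul_vecMulVec_mul (ann 2 1) ψ)]
  simp [Matrix.mul_apply, Matrix.vecMulVec_apply, Matrix.conjTranspose_apply, Vmat,
    Fin.sum_univ_two]

lemma rdm_eq (ψ : Idx 2 → ℂ) : oneRDM 2 ψ = (Vmat ψ)ᴴ * Vmat ψ := by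
  ext s t
  have h : adag 2 s = (ann 2 s)ᴴ := by rw [ann, conjTranspose_conjTranspose]
  rw [oneRDM]
  show ev ψ (adag 2 s * ann 2 t) = _
  rw [ev, h, ← Matrix.mulVec_mulVec, Matrix.dotProduct_mulVec, ← Matrix.star_mulVec]
  simp [Matrix.mul_apply, Matrix.conjTranspose_apply, Vmat, dotProduct]

/-- For a two-mode unit vector `ψ` with `ρ = |ψ⟩⟨ψ|` and
`Φ(ρ) = a₁ρa₁† + a₂ρa₂†`, the characteristic polynomial of `Φ(ρ)` equals
`X² · charpoly(M)`, where `M` is the one-particle reduced density matrix; in particular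
the nonzero spectra of `Φ(ρ)` and `M` coincide with multiplicities. -/
theorem Phi_charpoly_eq_oneRDM_charpoly_two_mode (ψ : Idx 2 → ℂ)
    (hψ : star ψ ⬝ᵥ ψ = 1) :
    (ann 2 0 * Matrix.vecMulVec ψ (star ψ) * adag 2 0 +
        ann 2 1 * Matrix.vecMulVec ψ (star ψ) * adag 2 1).charpoly =
      X ^ 2 * (oneRDM 2 ψ).charpoly := by
  rw [lhs_eq, rdm_eq]
  have h := charpoly_mul_comm_gen (Vmat ψ) (Vmat ψ)ᴴ
  have hc2 : Fintype.card (Fin 2) = 2 := rfl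
  have hc4 : Fintype.card (Idx 2) = 4 := by simp [Fintype.card_fun]
  rw [hc2, hc4] at h
  apply mul_left_cancel₀ (pow_ne_zero 2 (X_ne_zero (R := ℂ)))
  rw [h, ← mul_assoc, ← pow_add]
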